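/- arXiv:2510.08032 — 2 statements merged into one kernel-verified Lean document; each statement's English description precedes it below -/
import Mathlib

section
/- For any open set Ω ⊆ ℝ^d and exponents 1 ≤ q ≤ p < ∞ with λ_p(Ω) and λ_q(Ω) finite and positive, the inequality λ_p(Ω)^{1/p} / λ_q(Ω)^{1/q} ≥ q/p holds; equivalently, λ_q(Ω) ≤ (p/q)^q λ_p(Ω)^{q/p}. -/
open MeasureTheory
open scoped ENNReal

/-- First Dirichlet eigenvalue of the `p`-Laplacian on an open set `Ω ⊆ ℝ^d`,
defined as the infimum of Rayleigh quotients over nonzero `C_c^1` test functions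
supported in `Ω`; by convention it is `+∞` if no admissible function exists. -/
noncomputable def lambdaP (d : ℕ) (p : ℝ) (Ω : Set (EuclideanSpace ℝ (Fin d))) : ℝ≥0∞ :=
  sInf {R : ℝ≥0∞ | ∃ u : EuclideanSpace ℝ (Fin d) → ℝ,
    ContDiff ℝ 1 u ∧ HasCompactSupport u ∧ tsupport u ⊆ Ω ∧ u ≠ 0 ∧
    R = ENNReal.ofReal ((∫ x, ‖gradient u x‖ ^ p) / (∫ x, |u x| ^ p))}


private lemma hasDerivAt_phi {r : ℝ} (hr : 1 < r) (s : ℝ) :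
    HasDerivAt (fun t : ℝ => t * |t| ^ (r - 1)) (r * |s| ^ (r - 1)) s := by
  rcases lt_trichotomy s 0 with hs | hs | hs
  · have h1 : HasDerivAt (fun t : ℝ => -((-t) ^ r)) (r * (-s) ^ (r - 1)) s := by
      have h2 : HasDerivAt (fun y : ℝ => y ^ r) (r * (-s) ^ (r - 1)) (-s) :=
        Real.hasDerivAt_rpow_const (Or.inl (by linarith))
      have h3 := (h2.comp s (hasDerivAt_neg s)).neg
      exact h3.congr_deriv (by ring)
    have h4 : (fun t : ℝ => t * |t| ^ (r - 1)) =ᶠ[nhds s] fun t : ℝ => -((-t) ^ r) := by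
      filter_upwards [Iio_mem_nhds hs] with t ht
      have ht' : (0:ℝ) < -t := by simpa using ht
      have he : (-t) ^ r = (-t) * (-t) ^ (r - 1) := by
        nth_rewrite 2 [← Real.rpow_one (-t)]
        rw [← Real.rpow_add ht']; norm_num
      rw [abs_of_neg ht, he]; ring
    rw [abs_of_neg hs]
    exact (h1.congr_of_eventuallyEq h4)
  · subst hs
    have hr1 : r - 1 ≠ 0 := by exact sub_ne_zero.mpr hr.ne'
    rw [abs_zero, Real.zero_rpow hr1, mul_zero]
    rw [hasDerivAt_iff_tendsto_slope]
    have hcont : Filter.Tendsto (fun t : ℝ => |t| ^ (r - 1)) (nhds 0) (nhds 0) := by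
      have := (continuous_abs.rpow_const
        (fun x => Or.inr (by linarith : (0:ℝ) ≤ r - 1))).tendsto 0
      simpa [Real.zero_rpow hr1] using this
    refine (hcont.mono_left nhdsWithin_le_nhds).congr' ?_
    filter_upwards [self_mem_nhdsWithin] with t (ht : t ≠ 0)
    simp [slope, ht]
  · have h1 : HasDerivAt (fun t : ℝ => t ^ r) (r * s ^ (r - 1)) s :=
      Real.hasDerivAt_rpow_const (Or.inl hs.ne')
    have h4 : (fun t : ℝ => t * |t| ^ (r - 1)) =ᶠ[nhds s] fun t : ℝ => t ^ r := by
      filter_upwards [Ioi_mem_nhds hs] with t ht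
      have ht' : (0:ℝ) < t := ht
      have he : t * t ^ (r - 1) = t ^ r := by
        nth_rewrite 1 [← Real.rpow_one t]
        rw [← Real.rpow_add ht']; norm_num
      rw [abs_of_pos ht', he]
    rw [abs_of_pos hs]
    exact h1.congr_of_eventuallyEq h4

private lemma contDiff_phi {r : ℝ} (hr : 1 < r) :
    ContDiff ℝ 1 (fun t : ℝ => t * |t| ^ (r - 1)) := by
  rw [contDiff_one_iff_deriv]
  refine ⟨fun s => (hasDerivAt_phi hr s).differentiableAt, ?_⟩
  have hd : deriv (fun t : ℝ => t * |t| ^ (r - 1)) = fun s => r * |s| ^ (r - 1) :=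
    funext fun s => (hasDerivAt_phi hr s).deriv
  rw [hd]
  exact continuous_const.mul (continuous_abs.rpow_const fun x => Or.inr (by linarith))

private lemma norm_gradient_eq {d : ℕ} (f : EuclideanSpace ℝ (Fin d) → ℝ)
    (x : EuclideanSpace ℝ (Fin d)) : ‖gradient f x‖ = ‖fderiv ℝ f x‖ := by
  rw [gradient]
  exact (InnerProductSpace.toDual ℝ _).symm.norm_map _

private lemma key {d : ℕ} {p q : ℝ} (hq : 1 ≤ q) (hqp : q < p)
    {u : EuclideanSpace ℝ (Fin d) → ℝ} (hu : ContDiff ℝ 1 u) (hcs : HasCompactSupport u)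
    (hne : u ≠ 0) :
    ∃ v : EuclideanSpace ℝ (Fin d) → ℝ, ContDiff ℝ 1 v ∧ HasCompactSupport v ∧
      tsupport v ⊆ tsupport u ∧ v ≠ 0 ∧
      (∫ x, ‖gradient v x‖ ^ q) / (∫ x, |v x| ^ q) ≤
        (p / q) ^ q * ((∫ x, ‖gradient u x‖ ^ p) / (∫ x, |u x| ^ p)) ^ (q / p) := by
  have hq0 : (0:ℝ) < q := lt_of_lt_of_le one_pos hq
  have hp0 : (0:ℝ) < p := hq0.trans hqp
  have hpq0 : (0:ℝ) < p - q := by linarith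
  set r : ℝ := p / q with hrdef
  have hr : 1 < r := (one_lt_div hq0).mpr hqp
  have hr0 : (0:ℝ) < r := one_pos.trans hr
  have hrq : (r - 1) * q = p - q := by rw [hrdef]; field_simp
  have hrq2 : r * q = p := by rw [hrdef]; field_simp
  set φ : ℝ → ℝ := fun t => t * |t| ^ (r - 1) with hφdef
  set v : EuclideanSpace ℝ (Fin d) → ℝ := fun x => φ (u x) with hvdef
  have hφ0 : φ 0 = 0 := by simp [hφdef]
  have hv1 : ContDiff ℝ 1 v := (contDiff_phi hr).comp hu
  have hv2 : HasCompactSupport v := hcs.comp_left (g := φ) hφ0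
  have hv3 : tsupport v ⊆ tsupport u := by
    apply closure_mono
    intro x hx
    simp only [Function.mem_support] at hx ⊢
    intro hux
    exact hx (by simp [hvdef, hφdef, hux])
  obtain ⟨x₀, hx₀⟩ : ∃ x, u x ≠ 0 := by
    by_contra h; push_neg at h; exact hne (funext h)
  have hv4 : v ≠ 0 := by
    intro h
    have : v x₀ = 0 := by rw [h]; rfl
    exact (mul_ne_zero hx₀ (Real.rpow_pos_of_pos (abs_pos.mpr hx₀) _).ne') this
  -- gradient of v
  have hgrad : ∀ x, ‖gradient v x‖ = r * |u x| ^ (r - 1) * ‖fderiv ℝ u x‖ := by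
    intro x
    have hdu : HasFDerivAt u (fderiv ℝ u x) x := (hu.differentiable one_ne_zero x).hasFDerivAt
    have h1 : HasFDerivAt v ((r * |u x| ^ (r - 1)) • fderiv ℝ u x) x :=
      (hasDerivAt_phi hr (u x)).comp_hasFDerivAt x hdu
    rw [norm_gradient_eq, h1.fderiv, norm_smul, Real.norm_eq_abs,
      abs_of_nonneg (by positivity)]
  -- pointwise integrand identities
  have hGv : ∀ x, ‖gradient v x‖ ^ q = r ^ q * (|u x| ^ (p - q) * ‖fderiv ℝ u x‖ ^ q) := by
    intro x
    rw [hgrad x, Real.mul_rpow (by positivity) (norm_nonneg _),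
      Real.mul_rpow hr0.le (Real.rpow_nonneg (abs_nonneg _) _),
      ← Real.rpow_mul (abs_nonneg _), hrq, mul_assoc]
  have hUv : ∀ x, |v x| ^ q = |u x| ^ p := by
    intro x
    have h1 : |v x| = |u x| ^ r := by
      show |u x * |u x| ^ (r - 1)| = _
      rw [abs_mul, abs_of_nonneg (Real.rpow_nonneg (abs_nonneg _) _)]
      have h2 : |u x| ^ r = |u x| ^ (1 + (r - 1)) := by norm_num
      rw [h2, Real.rpow_add' (abs_nonneg _) (by linarith : (0:ℝ) < 1 + (r - 1)).ne',
        Real.rpow_one]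
    rw [h1, ← Real.rpow_mul (abs_nonneg _), hrq2]
  -- integrability / support facts
  have hcontu : Continuous u := hu.continuous
  have hcontf : Continuous (fderiv ℝ u) := hu.continuous_fderiv one_ne_zero
  have hsuppf : HasCompactSupport (fderiv ℝ u) := hcs.fderiv ℝ
  have hfc : Continuous fun x => |u x| ^ (p - q) :=
    (hcontu.abs).rpow_const fun x => Or.inr hpq0.le
  have hfs : HasCompactSupport fun x => |u x| ^ (p - q) :=
    hcs.comp_left (g := fun t => |t| ^ (p - q)) (by simp [Real.zero_rpow hpq0.ne'])
  have hgc : Continuous fun x => ‖fderiv ℝ u x‖ ^ q :=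
    (hcontf.norm).rpow_const fun x => Or.inr hq0.le
  have hgs : HasCompactSupport fun x => ‖fderiv ℝ u x‖ ^ q :=
    hsuppf.comp_left (g := fun L => ‖L‖ ^ q) (by simp [Real.zero_rpow hq0.ne'])
  -- Hölder's inequality
  have hconj : Real.HolderConjugate (p / (p - q)) (p / q) := by
    rw [Real.holderConjugate_iff]; constructor
    · exact (one_lt_div hpq0).mpr (by linarith)
    · rw [inv_div, inv_div]; field_simp; ring
  have holder := integral_mul_le_Lp_mul_Lq_of_nonneg (μ := volume) hconj
    (Filter.Eventually.of_forall fun x => Real.rpow_nonneg (abs_nonneg _) _)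
    (Filter.Eventually.of_forall fun x => Real.rpow_nonneg (norm_nonneg _) _)
    (hfc.memLp_of_hasCompactSupport hfs)
    (hgc.memLp_of_hasCompactSupport hgs)
  have e1 : ∀ x : EuclideanSpace ℝ (Fin d),
      (|u x| ^ (p - q)) ^ (p / (p - q)) = |u x| ^ p := by
    intro x; rw [← Real.rpow_mul (abs_nonneg _)]; congr 1; field_simp
  have e2 : ∀ x : EuclideanSpace ℝ (Fin d),
      (‖fderiv ℝ u x‖ ^ q) ^ (p / q) = ‖fderiv ℝ u x‖ ^ p := by
    intro x; rw [← Real.rpow_mul (norm_nonneg _)]; congr 1; field_simp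
  simp only [e1, e2, one_div_div] at holder
  -- rewrite the goal
  refine ⟨v, hv1, hv2, hv3, hv4, ?_⟩
  simp only [hGv, hUv]
  simp only [norm_gradient_eq]
  rw [MeasureTheory.integral_const_mul]
  set U : ℝ := ∫ x, |u x| ^ p with hUdef
  set G : ℝ := ∫ x, ‖fderiv ℝ u x‖ ^ p with hGdef
  have hG0 : 0 ≤ G := integral_nonneg fun x => Real.rpow_nonneg (norm_nonneg _) _
  have hU0 : 0 < U := by
    have hic : Continuous fun x => |u x| ^ p :=
      (hcontu.abs).rpow_const fun x => Or.inr hp0.le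
    have his : HasCompactSupport fun x => |u x| ^ p :=
      hcs.comp_left (g := fun t => |t| ^ p) (by simp [Real.zero_rpow hp0.ne'])
    rw [hUdef]
    refine (integral_pos_iff_support_of_nonneg
      (fun x => Real.rpow_nonneg (abs_nonneg _) _)
      (hic.integrable_of_hasCompactSupport his)).mpr ?_
    have hss : (Function.support fun x => |u x| ^ p) = Function.support u := by
      ext x
      simp only [Function.mem_support, ne_eq,
        Real.rpow_eq_zero_iff_of_nonneg (abs_nonneg _), abs_eq_zero]
      have hpne : p ≠ 0 := hp0.ne'
      tauto
    rw [hss, Function.support_eq_preimage]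
    exact (isOpen_compl_singleton.preimage hcontu).measure_pos volume ⟨x₀, hx₀⟩
  have hUq : (0:ℝ) < U ^ (q / p) := Real.rpow_pos_of_pos hU0 _
  have step : r ^ q * (∫ x, |u x| ^ (p - q) * ‖fderiv ℝ u x‖ ^ q) / U ≤
      r ^ q * (U ^ ((p - q) / p) * G ^ (q / p)) / U :=
    (div_le_div_iff_of_pos_right hU0).mpr (mul_le_mul_of_nonneg_left holder (by positivity))
  refine step.trans_eq ?_
  rw [Real.div_rpow hG0 hU0.le, mul_div_assoc]
  congr 1
  rw [div_eq_div_iff hU0.ne' hUq.ne', mul_right_comm]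
  have hUs : U ^ ((p - q) / p) * U ^ (q / p) = U := by
    rw [← Real.rpow_add hU0]
    have : (p - q) / p + q / p = 1 := by field_simp; ring
    rw [this, Real.rpow_one]
  rw [hUs]
  exact mul_comm _ _

/-- Generalized Cheeger inequality: for `1 ≤ q ≤ p < ∞` and an open set `Ω` with
finite positive eigenvalues, `λ_p(Ω)^{1/p} / λ_q(Ω)^{1/q} ≥ q/p`, equivalently
`λ_q(Ω) ≤ (p/q)^q λ_p(Ω)^{q/p}`. -/
theorem cheeger_pq (d : ℕ) (p q : ℝ) (hq : 1 ≤ q) (hqp : q ≤ p)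
    (Ω : Set (EuclideanSpace ℝ (Fin d))) (hΩ : IsOpen Ω)
    (hp0 : 0 < lambdaP d p Ω) (hpfin : lambdaP d p Ω < ⊤)
    (hq0 : 0 < lambdaP d q Ω) (hqfin : lambdaP d q Ω < ⊤) :
    q / p ≤ (lambdaP d p Ω).toReal ^ (1 / p) / (lambdaP d q Ω).toReal ^ (1 / q) ∧
      (lambdaP d q Ω).toReal ≤ (p / q) ^ q * (lambdaP d p Ω).toReal ^ (q / p) := by
  have hq0' : (0:ℝ) < q := lt_of_lt_of_le one_pos hq
  have hp0' : (0:ℝ) < p := lt_of_lt_of_le hq0' hqp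
  have hA0 : 0 < (lambdaP d p Ω).toReal := ENNReal.toReal_pos hp0.ne' hpfin.ne
  have hB0 : 0 < (lambdaP d q Ω).toReal := ENNReal.toReal_pos hq0.ne' hqfin.ne
  have main : (lambdaP d q Ω).toReal ≤ (p / q) ^ q * (lambdaP d p Ω).toReal ^ (q / p) := by
    rcases eq_or_lt_of_le hqp with heq | hlt
    · subst heq
      simp [div_self hq0'.ne', Real.one_rpow, Real.rpow_one]
    · have step1 : ∀ t : ℝ, (lambdaP d p Ω).toReal < t →
          (lambdaP d q Ω).toReal ≤ (p / q) ^ q * t ^ (q / p) := by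
        intro t ht
        have h1 : lambdaP d p Ω < ENNReal.ofReal t :=
          (ENNReal.lt_ofReal_iff_toReal_lt hpfin.ne).mpr ht
        unfold lambdaP at h1
        obtain ⟨R, hR, hRt⟩ := sInf_lt_iff.mp h1
        obtain ⟨u, hu, hcs, hsup, hne, rfl⟩ := hR
        have hray0 : 0 ≤ (∫ x, ‖gradient u x‖ ^ p) / (∫ x, |u x| ^ p) :=
          div_nonneg (integral_nonneg fun x => Real.rpow_nonneg (norm_nonneg _) _)
            (integral_nonneg fun x => Real.rpow_nonneg (abs_nonneg _) _)
        have hrayt : (∫ x, ‖gradient u x‖ ^ p) / (∫ x, |u x| ^ p) ≤ t := by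
          by_contra h
          push_neg at h
          exact absurd hRt (not_lt.mpr (ENNReal.ofReal_le_ofReal h.le))
        obtain ⟨v, hv1, hv2, hv3, hv4, hv5⟩ := key hq hlt hu hcs hne
        have hray0' : 0 ≤ (∫ x, ‖gradient v x‖ ^ q) / (∫ x, |v x| ^ q) :=
          div_nonneg (integral_nonneg fun x => Real.rpow_nonneg (norm_nonneg _) _)
            (integral_nonneg fun x => Real.rpow_nonneg (abs_nonneg _) _)
        have hle : lambdaP d q Ω ≤
            ENNReal.ofReal ((∫ x, ‖gradient v x‖ ^ q) / (∫ x, |v x| ^ q)) := by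
          unfold lambdaP
          exact sInf_le ⟨v, hv1, hv2, hv3.trans hsup, hv4, rfl⟩
        calc (lambdaP d q Ω).toReal
            ≤ (∫ x, ‖gradient v x‖ ^ q) / (∫ x, |v x| ^ q) :=
              ENNReal.toReal_le_of_le_ofReal hray0' hle
          _ ≤ (p / q) ^ q * ((∫ x, ‖gradient u x‖ ^ p) / (∫ x, |u x| ^ p)) ^ (q / p) := hv5
          _ ≤ (p / q) ^ q * t ^ (q / p) :=
              mul_le_mul_of_nonneg_left
                (Real.rpow_le_rpow hray0 hrayt (by positivity))
                (Real.rpow_nonneg (by positivity) _)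
      have hcont : Filter.Tendsto (fun t : ℝ => (p / q) ^ q * t ^ (q / p))
          (nhdsWithin (lambdaP d p Ω).toReal (Set.Ioi (lambdaP d p Ω).toReal))
          (nhds ((p / q) ^ q * (lambdaP d p Ω).toReal ^ (q / p))) := by
        apply Filter.Tendsto.mono_left _ nhdsWithin_le_nhds
        exact (continuousAt_const.mul
          (Real.continuousAt_rpow_const _ (q / p) (Or.inl hA0.ne'))).tendsto
      exact ge_of_tendsto hcont
        (eventually_nhdsWithin_of_forall fun t ht => step1 t (Set.mem_Ioi.mp ht))
  refine ⟨?_, main⟩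
  have hBq : (0:ℝ) < (lambdaP d q Ω).toReal ^ (1 / q) := Real.rpow_pos_of_pos hB0 _
  have h1 : (lambdaP d q Ω).toReal ^ (1 / q) ≤ (p / q) * (lambdaP d p Ω).toReal ^ (1 / p) := by
    have h2 : (lambdaP d q Ω).toReal ^ (1 / q) ≤
        ((p / q) ^ q * (lambdaP d p Ω).toReal ^ (q / p)) ^ (1 / q) :=
      Real.rpow_le_rpow hB0.le main (by positivity)
    refine h2.trans_eq ?_
    rw [Real.mul_rpow (by positivity) (Real.rpow_nonneg hA0.le _),
      ← Real.rpow_mul (by positivity : (0:ℝ) ≤ p / q), ← Real.rpow_mul hA0.le,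
      mul_one_div_cancel hq0'.ne', Real.rpow_one]
    have he : q / p * (1 / q) = 1 / p := by field_simp
    rw [he]
  rw [le_div_iff₀ hBq]
  have h3 : q / p * ((lambdaP d q Ω).toReal ^ (1 / q)) ≤
      q / p * ((p / q) * (lambdaP d p Ω).toReal ^ (1 / p)) :=
    mul_le_mul_of_nonneg_left h1 (by positivity)
  refine h3.trans_eq ?_
  rw [← mul_assoc]
  have : q / p * (p / q) = 1 := by field_simp
  rw [this, one_mul]
end

section
/- For an open set Ω ⊆ ℝ^d, the map p ↦ p λ_p(Ω)^{1/p} is monotonically nondecreasing on [1, ∞), i.e., if 1 ≤ q ≤ p < ∞ then q λ_q(Ω)^{1/q} ≤ p λ_p(Ω)^{1/p}. -/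
open MeasureTheory
open scoped ENNReal


lemma contDiff_abs_rpow' {α : ℝ} (hα : 1 < α) : ContDiff ℝ 1 (fun t : ℝ => |t| ^ α) := by
  simpa [Real.norm_eq_abs] using contDiff_norm_rpow (E := ℝ) hα

lemma abs_D' {α : ℝ} (hα : 1 < α) (t : ℝ) :
    |α * |t| ^ (α - 2) * t| = α * |t| ^ (α - 1) := by
  rcases eq_or_ne t 0 with rfl | ht
  · simp [Real.zero_rpow (by linarith : α - 1 ≠ 0)]
  · have h2 : |t| ^ (α - 2) * |t| = |t| ^ (α - 1) := by
      have h3 := (Real.rpow_add (abs_pos.mpr ht) (α - 2) 1).symm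
      rw [Real.rpow_one] at h3
      rw [h3]; ring_nf
    rw [abs_mul, abs_mul, abs_of_pos (by linarith : (0:ℝ) < α),
      abs_of_nonneg (Real.rpow_nonneg (abs_nonneg t) _), mul_assoc, h2]

lemma norm_gradient_eq' {F : Type*} [NormedAddCommGroup F] [InnerProductSpace ℝ F]
    [CompleteSpace F] (f : F → ℝ) (x : F) : ‖gradient f x‖ = ‖fderiv ℝ f x‖ := by
  rw [gradient]; exact LinearIsometryEquiv.norm_map _ _


set_option maxHeartbeats 1000000 in
lemma key_ineq (d : ℕ) (p q : ℝ) (hq : 1 ≤ q) (hqp : q < p)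
    (Ω : Set (EuclideanSpace ℝ (Fin d))) (hqfin : lambdaP d q Ω ≠ ⊤)
    (u : EuclideanSpace ℝ (Fin d) → ℝ) (hu1 : ContDiff ℝ 1 u) (hu2 : HasCompactSupport u)
    (hu3 : tsupport u ⊆ Ω) (hu4 : u ≠ 0) :
    q * (lambdaP d q Ω).toReal ^ (1 / q) ≤
      p * ((∫ x, ‖gradient u x‖ ^ p) / (∫ x, |u x| ^ p)) ^ (1 / p) := by
  have hq0 : 0 < q := lt_of_lt_of_le one_pos hq
  have hp0 : 0 < p := lt_trans hq0 hqp
  set α : ℝ := p / q with hαdef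
  have hα : 1 < α := (one_lt_div hq0).mpr hqp
  set G : EuclideanSpace ℝ (Fin d) → ℝ := fun x => ‖fderiv ℝ u x‖ with hGdef
  set A : ℝ := ∫ x, ‖gradient u x‖ ^ p with hAdef
  set B : ℝ := ∫ x, |u x| ^ p with hBdef
  have hAeq : A = ∫ x, G x ^ p := by
    apply integral_congr_ae; filter_upwards with x; rw [norm_gradient_eq']
  have hA0 : 0 ≤ A := by
    apply integral_nonneg; intro x; exact Real.rpow_nonneg (norm_nonneg _) _
  -- continuity facts
  have hucont : Continuous u := hu1.continuous
  have hGcont : Continuous G := (hu1.continuous_fderiv one_ne_zero).norm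
  -- positivity of B
  have hBint : Integrable (fun x => |u x| ^ p) := by
    apply Continuous.integrable_of_hasCompactSupport
    · exact hucont.abs.rpow_const (fun x => Or.inr hp0.le)
    · exact hu2.comp_left (g := fun t : ℝ => |t| ^ p)
        (by simp [Real.zero_rpow hp0.ne'])
  have hB : 0 < B := by
    rw [hBdef, integral_pos_iff_support_of_nonneg
      (fun x => Real.rpow_nonneg (abs_nonneg _) _) hBint]
    have hsup : Function.support (fun x => |u x| ^ p) = {x | u x ≠ 0} := by
      ext x
      simp only [Function.mem_support, Set.mem_setOf_eq]
      rw [ne_eq, Real.rpow_eq_zero (abs_nonneg _) hp0.ne', abs_eq_zero]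
    rw [hsup]
    obtain ⟨x0, hx0⟩ := Function.ne_iff.mp hu4
    exact (isOpen_ne_fun hucont continuous_const).measure_pos volume ⟨x0, hx0⟩
  -- the test function v
  set v : EuclideanSpace ℝ (Fin d) → ℝ := fun x => |u x| ^ α with hvdef
  have hv1 : ContDiff ℝ 1 v := (contDiff_abs_rpow' hα).comp hu1
  have hv0 : (fun t : ℝ => |t| ^ α) 0 = 0 := by simp [Real.zero_rpow (by positivity : α ≠ 0)]
  have hv2 : HasCompactSupport v := by
    have := hu2.comp_left (g := fun t : ℝ => |t| ^ α) hv0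
    exact this
  have hv3 : tsupport v ⊆ Ω := by
    have hsupp : Function.support v ⊆ Function.support u := by
      intro x hx
      simp only [Function.mem_support] at hx ⊢
      intro h0
      apply hx
      rw [hvdef]; simp [h0, Real.zero_rpow (by positivity : α ≠ 0)]
    exact subset_trans (closure_mono hsupp) hu3
  have hv4 : v ≠ 0 := by
    obtain ⟨x0, hx0⟩ := Function.ne_iff.mp hu4
    intro h
    have : v x0 = 0 := by rw [h]; rfl
    have hpos : 0 < v x0 := Real.rpow_pos_of_pos (abs_pos.mpr hx0) _
    linarith
  -- gradient of v
  have hgradv : ∀ x, ‖gradient v x‖ = α * |u x| ^ (α - 1) * G x := by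
    intro x
    have hd : HasFDerivAt v ((α * |u x| ^ (α - 2) * u x) • fderiv ℝ u x) x :=
      (hasDerivAt_abs_rpow (u x) hα).comp_hasFDerivAt x
        ((hu1.differentiable one_ne_zero) x).hasFDerivAt
    rw [norm_gradient_eq', hd.fderiv, norm_smul, Real.norm_eq_abs, abs_D' hα]
  -- denominator of v
  have hBv : (∫ x, |v x| ^ q) = B := by
    rw [hBdef]
    apply integral_congr_ae; filter_upwards with x
    rw [hvdef]
    simp only
    rw [abs_of_nonneg (Real.rpow_nonneg (abs_nonneg _) _), ← Real.rpow_mul (abs_nonneg _),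
      div_mul_cancel₀ p hq0.ne']
  -- numerator of v
  have hNum : (∫ x, ‖gradient v x‖ ^ q) = α ^ q * ∫ x, |u x| ^ (p - q) * G x ^ q := by
    rw [← integral_const_mul]
    apply integral_congr_ae; filter_upwards with x
    rw [hgradv x, Real.mul_rpow (by positivity) (norm_nonneg _),
      Real.mul_rpow (by positivity) (Real.rpow_nonneg (abs_nonneg _) _),
      ← Real.rpow_mul (abs_nonneg _)]
    have : (α - 1) * q = p - q := by
      rw [hαdef]; field_simp
    rw [this, mul_assoc]
  -- Hölder
  set s : ℝ := p / (p - q) with hsdef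
  set t : ℝ := p / q with htdef
  have hst : Real.HolderConjugate s t := by
    rw [Real.holderConjugate_iff]; constructor
    · rw [hsdef]; exact (one_lt_div (by linarith)).mpr (by linarith)
    · rw [hsdef, htdef, inv_div, inv_div]
      field_simp
      ring
  have hHolder : (∫ x, |u x| ^ (p - q) * G x ^ q) ≤ B ^ ((p - q) / p) * (∫ x, G x ^ p) ^ (q / p) := by
    have hf : MemLp (fun x => |u x| ^ (p - q)) (ENNReal.ofReal s) := by
      apply Continuous.memLp_of_hasCompactSupport
      · exact hucont.abs.rpow_const (fun x => Or.inr (by linarith))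
      · exact hu2.comp_left (g := fun t : ℝ => |t| ^ (p - q))
          (by simp [Real.zero_rpow (by linarith : p - q ≠ 0)])
    have hg : MemLp (fun x => G x ^ q) (ENNReal.ofReal t) := by
      apply Continuous.memLp_of_hasCompactSupport
      · exact hGcont.rpow_const (fun x => Or.inr hq0.le)
      · exact (hu2.fderiv (𝕜 := ℝ)).comp_left (g := fun L => ‖L‖ ^ q)
          (by simp [Real.zero_rpow hq0.ne'])
    have h := integral_mul_le_Lp_mul_Lq_of_nonneg hst
      (Filter.Eventually.of_forall fun x => Real.rpow_nonneg (abs_nonneg _) _)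
      (Filter.Eventually.of_forall fun x => Real.rpow_nonneg (norm_nonneg _) _) hf hg
    have e1 : (∫ x, (|u x| ^ (p - q)) ^ s) = B := by
      rw [hBdef]; apply integral_congr_ae; filter_upwards with x
      rw [← Real.rpow_mul (abs_nonneg _)]
      congr 1
      rw [hsdef, mul_comm, div_mul_cancel₀ p (by linarith : p - q ≠ 0)]
    have e2 : (∫ x, (G x ^ q) ^ t) = ∫ x, G x ^ p := by
      apply integral_congr_ae; filter_upwards with x
      rw [← Real.rpow_mul (norm_nonneg _)]
      congr 1
      rw [htdef, mul_comm, div_mul_cancel₀ p hq0.ne']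
    have e3 : 1 / s = (p - q) / p := by rw [hsdef, one_div_div]
    have e4 : 1 / t = q / p := by rw [htdef, one_div_div]
    rw [e1, e2, e3, e4] at h
    exact h
  -- combine: ratio for v is at most α^q * (A/B)^(q/p)
  set r : ℝ := A / B with hrdef
  have hr0 : 0 ≤ r := div_nonneg hA0 hB.le
  have hBA : B ^ ((p - q) / p) * (∫ x, G x ^ p) ^ (q / p) = B * r ^ (q / p) := by
    rw [← hAeq, hrdef, Real.div_rpow hA0 hB.le]
    rw [show ((p - q) / p : ℝ) = 1 - q / p by field_simp, Real.rpow_sub hB, Real.rpow_one]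
    field_simp
  have hratio : (∫ x, ‖gradient v x‖ ^ q) / (∫ x, |v x| ^ q) ≤ α ^ q * r ^ (q / p) := by
    rw [hBv, hNum, div_le_iff₀ hB]
    calc α ^ q * ∫ x, |u x| ^ (p - q) * G x ^ q
        ≤ α ^ q * (B * r ^ (q / p)) := by
          apply mul_le_mul_of_nonneg_left _ (by positivity)
          rw [← hBA]; exact hHolder
      _ = α ^ q * r ^ (q / p) * B := by ring
  -- lambda_q is at most the ratio for v
  have hle : lambdaP d q Ω ≤ ENNReal.ofReal (α ^ q * r ^ (q / p)) := by
    refine le_trans (sInf_le ⟨v, hv1, hv2, hv3, hv4, rfl⟩) ?_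
    exact ENNReal.ofReal_le_ofReal hratio
  have hlam : (lambdaP d q Ω).toReal ≤ α ^ q * r ^ (q / p) := by
    have := ENNReal.toReal_mono ENNReal.ofReal_ne_top hle
    rwa [ENNReal.toReal_ofReal (by positivity)] at this
  -- final computation
  calc q * (lambdaP d q Ω).toReal ^ (1 / q)
      ≤ q * (α ^ q * r ^ (q / p)) ^ (1 / q) := by
        apply mul_le_mul_of_nonneg_left _ hq0.le
        exact Real.rpow_le_rpow ENNReal.toReal_nonneg hlam (by positivity)
    _ = q * (α * r ^ (1 / p)) := by
        congr 1
        rw [Real.mul_rpow (by positivity) (Real.rpow_nonneg hr0 _),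
          ← Real.rpow_mul (by positivity : (0:ℝ) ≤ α), mul_one_div_cancel hq0.ne',
          Real.rpow_one, ← Real.rpow_mul hr0,
          show q / p * (1 / q) = 1 / p by field_simp]
    _ = p * r ^ (1 / p) := by
        rw [← mul_assoc, hαdef, mul_div_cancel₀ p hq0.ne']

/-- Monotonicity: the map `p ↦ p λ_p(Ω)^{1/p}` is nondecreasing on `[1, ∞)`. -/
theorem mono_p_lambda (d : ℕ) (p q : ℝ) (hq : 1 ≤ q) (hqp : q ≤ p)
    (Ω : Set (EuclideanSpace ℝ (Fin d))) (hΩ : IsOpen Ω)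
    (hpfin : lambdaP d p Ω ≠ ⊤) (hqfin : lambdaP d q Ω ≠ ⊤) :
    q * (lambdaP d q Ω).toReal ^ (1 / q) ≤ p * (lambdaP d p Ω).toReal ^ (1 / p) := by
  rcases eq_or_lt_of_le hqp with rfl | hlt
  · exact le_rfl
  have hq0 : 0 < q := lt_of_lt_of_le one_pos hq
  have hp0 : 0 < p := lt_trans hq0 hlt
  set c : ℝ := q * (lambdaP d q Ω).toReal ^ (1 / q) with hc
  have hc0 : 0 ≤ c := mul_nonneg hq0.le (Real.rpow_nonneg ENNReal.toReal_nonneg _)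
  have key : ENNReal.ofReal ((c / p) ^ p) ≤ lambdaP d p Ω := by
    apply le_sInf
    rintro R ⟨u, hu1, hu2, hu3, hu4, rfl⟩
    set r : ℝ := (∫ x, ‖gradient u x‖ ^ p) / (∫ x, |u x| ^ p) with hr
    have hr0 : 0 ≤ r := div_nonneg
      (integral_nonneg fun x => Real.rpow_nonneg (norm_nonneg _) _)
      (integral_nonneg fun x => Real.rpow_nonneg (abs_nonneg _) _)
    have h5 : c ≤ p * r ^ (1 / p) :=
      key_ineq d p q hq hlt Ω hqfin u hu1 hu2 hu3 hu4
    have h6 : c / p ≤ r ^ (1 / p) := by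
      rw [div_le_iff₀ hp0, mul_comm]; exact h5
    have h7 : (c / p) ^ p ≤ r := by
      have := Real.rpow_le_rpow (by positivity) h6 hp0.le
      rwa [← Real.rpow_mul hr0, one_div_mul_cancel hp0.ne', Real.rpow_one] at this
    exact ENNReal.ofReal_le_ofReal h7
  have h1 : (c / p) ^ p ≤ (lambdaP d p Ω).toReal := by
    have := ENNReal.toReal_mono hpfin key
    rwa [ENNReal.toReal_ofReal (by positivity)] at this
  have h2 : c / p ≤ (lambdaP d p Ω).toReal ^ (1 / p) := by
    have := Real.rpow_le_rpow (by positivity) h1 (by positivity : (0:ℝ) ≤ 1 / p)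
    rwa [← Real.rpow_mul (by positivity), mul_one_div_cancel hp0.ne', Real.rpow_one] at this
  calc c = c / p * p := by field_simp
    _ ≤ (lambdaP d p Ω).toReal ^ (1 / p) * p := mul_le_mul_of_nonneg_right h2 hp0.le
    _ = p * (lambdaP d p Ω).toReal ^ (1 / p) := mul_comm _ _
end
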